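/- Let m ≥ 2 be a natural number, λ, C > 0 real numbers with λ > C + 2, set k* := ⌊m·(1 − (C+2)/λ)⌋, and let δ be a real with 0 < δ < 1 and e·m^{−λ/2} / (1 − (C+2)/λ) ≤ δ. Then Σ_{k=k*+1}^{⌊m/2⌋} (m choose k) · m^{−λ·k·(m−k)/m} ≤ δ^{k*+1} / (1 − δ), where m^x denotes the real power exp(x·log m) and e = exp(1). -/

import Mathlib

lemma choose_le_exp_pow (m k : ℕ) (hk : 0 < k) :
    (m.choose k : ℝ) ≤ (Real.exp 1 * m / k) ^ k := by
  have hkR : (0:ℝ) < k := by exact_mod_cast hk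
  have h1 : (m.choose k : ℝ) ≤ (m:ℝ) ^ k / (Nat.factorial k : ℝ) := by
    exact_mod_cast Nat.choose_le_pow_div k m
  have h2 : (k:ℝ) ^ k / (Nat.factorial k : ℝ) ≤ Real.exp k :=
    Real.pow_div_factorial_le_exp (k:ℝ) hkR.le k
  have hfac : (0:ℝ) < (Nat.factorial k : ℝ) := by exact_mod_cast k.factorial_pos
  have h3 : (m:ℝ) ^ k / (Nat.factorial k : ℝ) ≤ Real.exp k * ((m:ℝ) / k) ^ k := by
    rw [div_pow]
    rw [div_le_iff₀ hfac] at h2 ⊢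
    have hmk : (0:ℝ) ≤ (m:ℝ) ^ k / (k:ℝ) ^ k := by positivity
    calc (m:ℝ) ^ k = (m:ℝ) ^ k / (k:ℝ) ^ k * (k:ℝ) ^ k := by
            field_simp
      _ ≤ (m:ℝ) ^ k / (k:ℝ) ^ k * (Real.exp k * Nat.factorial k) := by
            exact mul_le_mul_of_nonneg_left h2 hmk
      _ = Real.exp k * ((m:ℝ) ^ k / (k:ℝ) ^ k) * Nat.factorial k := by ring
  have h4 : Real.exp (k:ℝ) * ((m:ℝ) / k) ^ k = (Real.exp 1 * m / k) ^ k := by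
    rw [mul_div_assoc, mul_pow, ← Real.exp_nat_mul]
    ring_nf
  calc (m.choose k : ℝ) ≤ (m:ℝ) ^ k / (Nat.factorial k : ℝ) := h1
    _ ≤ Real.exp k * ((m:ℝ) / k) ^ k := h3
    _ = (Real.exp 1 * m / k) ^ k := h4

/-- (Appendix D of the paper, second lemma, bound on `d_m`.)
For `λ > C + 2`, `k* = ⌊m(1 − (C+2)/λ)⌋` and `0 < δ < 1` with
`e·m^{−λ/2}/(1 − (C+2)/λ) ≤ δ`,
`Σ_{k=k*+1}^{⌊m/2⌋} C(m,k)·m^{−λk(m−k)/m} ≤ δ^{k*+1}/(1 − δ)`. -/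
theorem appendixD_dm_bound (m : ℕ) (hm : 2 ≤ m) (lam C δ : ℝ)
    (hlam : 0 < lam) (hC : 0 < C) (h : C + 2 < lam)
    (hδ0 : 0 < δ) (hδ1 : δ < 1)
    (hδ : Real.exp 1 * (m:ℝ) ^ (-(lam/2)) / (1 - (C+2)/lam) ≤ δ) :
    ∑ k ∈ Finset.Icc (⌊(m:ℝ) * (1 - (C+2)/lam)⌋₊ + 1) (m/2),
      (m.choose k : ℝ) * (m:ℝ) ^ (-(lam * (k:ℝ) * ((m:ℝ) - (k:ℝ))) / (m:ℝ))
      ≤ δ ^ (⌊(m:ℝ) * (1 - (C+2)/lam)⌋₊ + 1) / (1 - δ) := by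
  set a := ⌊(m:ℝ) * (1 - (C+2)/lam)⌋₊ + 1 with ha
  have hmR : (1:ℝ) < (m:ℝ) := by exact_mod_cast hm.trans_lt' one_lt_two
  have hm0 : (0:ℝ) < m := lt_trans one_pos hmR
  have ht : 0 < 1 - (C+2)/lam := by
    rw [sub_pos, div_lt_one hlam]; exact h
  -- Step 1: each term is at most δ ^ k
  have key : ∀ k ∈ Finset.Icc a (m/2),
      (m.choose k : ℝ) * (m:ℝ) ^ (-(lam * (k:ℝ) * ((m:ℝ) - (k:ℝ))) / (m:ℝ)) ≤ δ ^ k := by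
    intro k hk
    rw [Finset.mem_Icc] at hk
    have hk0 : 0 < k := lt_of_lt_of_le (Nat.succ_pos _) hk.1
    have hkR : (0:ℝ) < k := by exact_mod_cast hk0
    -- k > m * (1 - (C+2)/lam)
    have hklb : (m:ℝ) * (1 - (C+2)/lam) < k := by
      have := Nat.lt_floor_add_one ((m:ℝ) * (1 - (C+2)/lam))
      calc (m:ℝ) * (1 - (C+2)/lam) < ⌊(m:ℝ) * (1 - (C+2)/lam)⌋₊ + 1 := this
        _ ≤ k := by exact_mod_cast hk.1
    -- k ≤ m/2 as reals
    have hkub : (k:ℝ) ≤ (m:ℝ) / 2 := by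
      have h2 : k * 2 ≤ m := (Nat.le_div_iff_mul_le (by norm_num)).mp hk.2
      have : (k:ℝ) * 2 ≤ m := by exact_mod_cast h2
      linarith
    -- exponent bound: the rpow term ≤ (m ^ (-(lam/2)))^k
    have hexp : (m:ℝ) ^ (-(lam * (k:ℝ) * ((m:ℝ) - (k:ℝ))) / (m:ℝ))
        ≤ ((m:ℝ) ^ (-(lam/2))) ^ k := by
      rw [← Real.rpow_natCast ((m:ℝ) ^ (-(lam/2))) k, ← Real.rpow_mul hm0.le]
      apply Real.rpow_le_rpow_left_iff hmR |>.mpr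
      rw [div_le_iff₀ hm0]
      have hmk : (m:ℝ)/2 ≤ (m:ℝ) - k := by linarith
      nlinarith [mul_pos hlam hkR]
    have hpos : (0:ℝ) < (m:ℝ) ^ (-(lam/2)) := Real.rpow_pos_of_pos hm0 _
    have hcb := choose_le_exp_pow m k hk0
    have hterm : (m.choose k : ℝ) * (m:ℝ) ^ (-(lam * (k:ℝ) * ((m:ℝ) - (k:ℝ))) / (m:ℝ))
        ≤ (Real.exp 1 * m / k * (m:ℝ) ^ (-(lam/2))) ^ k := by
      rw [mul_pow]
      apply mul_le_mul hcb hexp (Real.rpow_nonneg hm0.le _) (by positivity)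
    refine hterm.trans ?_
    apply pow_le_pow_left₀ (by positivity)
    -- e * m / k * m^{-lam/2} ≤ δ
    have hbase : Real.exp 1 * m / k * (m:ℝ) ^ (-(lam/2))
        ≤ Real.exp 1 * (m:ℝ) ^ (-(lam/2)) / (1 - (C+2)/lam) := by
      have hmk2 : (m:ℝ) / k ≤ 1 / (1 - (C+2)/lam) := by
        rw [div_le_div_iff₀ hkR ht]
        nlinarith
      calc Real.exp 1 * m / k * (m:ℝ) ^ (-(lam/2))
          = (Real.exp 1 * (m:ℝ) ^ (-(lam/2))) * ((m:ℝ)/k) := by ring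
        _ ≤ (Real.exp 1 * (m:ℝ) ^ (-(lam/2))) * (1 / (1 - (C+2)/lam)) := by
            apply mul_le_mul_of_nonneg_left hmk2 (by positivity)
        _ = Real.exp 1 * (m:ℝ) ^ (-(lam/2)) / (1 - (C+2)/lam) := by ring
    exact hbase.trans hδ
  -- Step 2: geometric sum
  have hsum : ∑ k ∈ Finset.Icc a (m/2), δ ^ k ≤ δ ^ a / (1 - δ) := by
    by_cases hab : a ≤ m/2
    · rw [← Finset.Ico_add_one_right_eq_Icc, Finset.sum_Ico_eq_sum_range]
      have : ∀ i ∈ Finset.range (m/2 + 1 - a), δ ^ (a + i) = δ ^ a * δ ^ i := by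
        intro i _; rw [pow_add]
      rw [Finset.sum_congr rfl this, ← Finset.mul_sum]
      rw [div_eq_mul_inv]
      apply mul_le_mul_of_nonneg_left _ (by positivity)
      have h1δ : (0:ℝ) < 1 - δ := by linarith
      rw [geom_sum_eq hδ1.ne, div_le_iff_of_neg (by linarith : δ - 1 < 0)]
      have hnn := pow_nonneg hδ0.le (m/2 + 1 - a)
      have hinv : (1 - δ)⁻¹ * (δ - 1) = -1 := by field_simp; ring
      rw [hinv]; linarith
    · rw [Finset.Icc_eq_empty (by omega), Finset.sum_empty]
      have h1δ : (0:ℝ) < 1 - δ := by linarith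
      positivity
  calc ∑ k ∈ Finset.Icc a (m/2),
      (m.choose k : ℝ) * (m:ℝ) ^ (-(lam * (k:ℝ) * ((m:ℝ) - (k:ℝ))) / (m:ℝ))
      ≤ ∑ k ∈ Finset.Icc a (m/2), δ ^ k := Finset.sum_le_sum key
    _ ≤ δ ^ a / (1 - δ) := hsum
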